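/- Let h ∈ 𝒮(ℝ²) be a Schwartz function and let ω ∈ S¹ be a unit vector. Then ∫_{ℝ²} (∫_{−∞}^{∞} ĝ(tω) e^{−2πi x·(tω)} dt)² h(x) dx = ∫_{ℝ} (ĝ ∗₁ ĝ)(tω) ĥ(tω) dt for any Schwartz g, where (ĝ ∗₁ ĝ)(tω) = ∫_ℝ ĝ(uω)ĝ((t−u)ω) du is convolution along the line ℝω. -/

import Mathlib

open MeasureTheory

/-- The Fourier character `e^{-2πi x·ξ}` on `ℝ^d`. -/
noncomputable def eK {d : ℕ} (x ξ : EuclideanSpace ℝ (Fin d)) : ℂ :=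
  Complex.exp (((-2 * Real.pi * (inner ℝ x ξ : ℝ) : ℝ) : ℂ) * Complex.I)

/-- The Fourier transform of a function on `ℝ^d`. -/
noncomputable def FT {d : ℕ} (f : EuclideanSpace ℝ (Fin d) → ℂ)
    (ξ : EuclideanSpace ℝ (Fin d)) : ℂ :=
  ∫ x, f x * eK x ξ

open scoped FourierTransform RealInnerProductSpace SchwartzMap

namespace SlicePlancherelAux

noncomputable abbrev E2 := EuclideanSpace ℝ (Fin 2)

lemma eK_norm {d : ℕ} (x ξ : EuclideanSpace ℝ (Fin d)) : ‖eK x ξ‖ = 1 := by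
  unfold eK
  rw [Complex.norm_exp]
  simp

lemma eK_add (x ω : E2) (u v : ℝ) :
    eK x (u • ω) * eK x (v • ω) = eK x ((u + v) • ω) := by
  unfold eK
  rw [← Complex.exp_add]
  congr 1
  rw [real_inner_smul_right, real_inner_smul_right, real_inner_smul_right]
  push_cast
  ring

lemma FT_eq (f : E2 → ℂ) (ξ : E2) : FT f ξ = 𝓕 f ξ := by
  rw [Real.fourier_eq']
  refine congrArg (integral volume) (funext fun x => ?_)
  rw [smul_eq_mul, mul_comm]
  rfl

/-- Coercion of a real Schwartz function to a complex one. -/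
noncomputable def ofRealS (f : 𝓢(E2, ℝ)) : 𝓢(E2, ℂ) where
  toFun x := (f x : ℂ)
  smooth' := Complex.ofRealCLM.contDiff.comp f.smooth'
  decay' := by
    intro k n
    obtain ⟨C, hC⟩ := f.decay' k n
    refine ⟨C, fun x => ?_⟩
    have h1 : ‖iteratedFDeriv ℝ n (fun x => ((f x : ℝ) : ℂ)) x‖
        = ‖iteratedFDeriv ℝ n f x‖ :=
      Complex.ofRealLI.norm_iteratedFDeriv_comp_left f.smooth'.contDiffAt (by exact_mod_cast le_top)
    rw [h1]
    exact hC x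

@[simp] lemma ofRealS_apply (f : 𝓢(E2, ℝ)) (x : E2) : ofRealS f x = (f x : ℂ) := rfl

/-- Restriction of a Schwartz function to a line through the origin. -/
noncomputable def sliceS (ω : E2) (hω : ‖ω‖ = 1) (f : 𝓢(E2, ℂ)) : 𝓢(ℝ, ℂ) :=
  SchwartzMap.compCLM (𝕜 := ℝ)
    (ContinuousLinearMap.toSpanSingleton ℝ ω).hasTemperateGrowth
    ⟨1, 1, fun t => by
      simp only [ContinuousLinearMap.toSpanSingleton_apply, norm_smul, hω, mul_one,
        Real.norm_eq_abs, pow_one, one_mul]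
      linarith [abs_nonneg t]⟩ f

@[simp] lemma sliceS_apply (ω : E2) (hω : ‖ω‖ = 1) (f : 𝓢(E2, ℂ)) (t : ℝ) :
    sliceS ω hω f t = f (t • ω) := by
  simp [sliceS, ContinuousLinearMap.toSpanSingleton_apply]

end SlicePlancherelAux

open SlicePlancherelAux

theorem slice_plancherel_identity
    (g h : SchwartzMap (EuclideanSpace ℝ (Fin 2)) ℝ)
    (ω : EuclideanSpace ℝ (Fin 2)) (hω : ‖ω‖ = 1) :
    (∫ x, (∫ t : ℝ, FT (fun y => (g y : ℂ)) (t • ω) * eK x (t • ω))^2 * (h x : ℂ)) =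
      ∫ t : ℝ, (∫ u : ℝ, FT (fun y => (g y : ℂ)) (u • ω) *
          FT (fun y => (g y : ℂ)) ((t - u) • ω)) *
        FT (fun y => (h y : ℂ)) (t • ω) := by
  set Gs : SchwartzMap ℝ ℂ :=
    sliceS ω hω (SchwartzMap.fourierTransformCLM ℂ (ofRealS g)) with hGsdef
  set Hs : SchwartzMap ℝ ℂ :=
    sliceS ω hω (SchwartzMap.fourierTransformCLM ℂ (ofRealS h)) with hHsdef
  have hG : ∀ s : ℝ, FT (fun y => (g y : ℂ)) (s • ω) = Gs s := by
    intro s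
    rw [hGsdef, sliceS_apply, SchwartzMap.fourierTransformCLM_apply, SchwartzMap.fourier_coe, ← FT_eq]
    rfl
  have hH : ∀ s : ℝ, FT (fun y => (h y : ℂ)) (s • ω) = Hs s := by
    intro s
    rw [hHsdef, sliceS_apply, SchwartzMap.fourierTransformCLM_apply, SchwartzMap.fourier_coe, ← FT_eq]
    rfl
  simp only [hG, hH]
  -- integrability facts
  have hGi : Integrable (⇑Gs) volume := Gs.integrable
  have hHbd : ∃ C : ℝ, ∀ s : ℝ, ‖Hs s‖ ≤ C := by
    obtain ⟨C, -, hC⟩ := Hs.decay 0 0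
    exact ⟨C, fun s => by simpa [norm_iteratedFDeriv_zero] using hC s⟩
  -- the common product-integral form
  set Ψ : ℝ × ℝ → ℂ := fun p => Gs p.1 * Gs p.2 * Hs (p.1 + p.2) with hΨdef
  have hΨi : Integrable Ψ ((volume : Measure ℝ).prod volume) := by
    obtain ⟨C, hC⟩ := hHbd
    refine ((hGi.norm.mul_prod hGi.norm).mul_const C).mono' ?_ ?_
    · exact (((Gs.continuous.comp continuous_fst).mul
        (Gs.continuous.comp continuous_snd)).mul
        (Hs.continuous.comp (continuous_fst.add continuous_snd))).aestronglyMeasurable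
    · filter_upwards with p
      rw [hΨdef]
      simp only [norm_mul]
      have h1 : (0:ℝ) ≤ ‖Gs p.1‖ * ‖Gs p.2‖ := by positivity
      calc ‖Gs p.1‖ * ‖Gs p.2‖ * ‖Hs (p.1 + p.2)‖
          ≤ ‖Gs p.1‖ * ‖Gs p.2‖ * C := by
            exact mul_le_mul_of_nonneg_left (hC _) h1
        _ = ‖Gs p.1‖ * ‖Gs p.2‖ * C := rfl
  -- LHS computation
  have key1 : ∀ x : E2, (∫ t : ℝ, Gs t * eK x (t • ω))^2
      = ∫ p : ℝ × ℝ, Gs p.1 * Gs p.2 * eK x ((p.1 + p.2) • ω)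
          ∂((volume : Measure ℝ).prod volume) := by
    intro x
    rw [sq, ← integral_prod_mul]
    refine congrArg (integral _) (funext fun p => ?_)
    rw [mul_mul_mul_comm, eK_add]
  have hΦi : Integrable
      (Function.uncurry fun (x : E2) (p : ℝ × ℝ) =>
        Gs p.1 * Gs p.2 * eK x ((p.1 + p.2) • ω) * (h x : ℂ))
      ((volume : Measure E2).prod ((volume : Measure ℝ).prod volume)) := by
    have hB : Integrable
        (fun z : E2 × (ℝ × ℝ) => ‖h z.1‖ * (‖Gs z.2.1‖ * ‖Gs z.2.2‖))
        ((volume : Measure E2).prod ((volume : Measure ℝ).prod volume)) :=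
      (h.integrable.norm).mul_prod (hGi.norm.mul_prod hGi.norm)
    refine hB.mono' ?_ ?_
    · have hcont : Continuous fun z : E2 × (ℝ × ℝ) =>
          eK z.1 ((z.2.1 + z.2.2) • ω) := by
        unfold eK
        refine Complex.continuous_exp.comp (Continuous.mul ?_ continuous_const)
        refine Complex.continuous_ofReal.comp (Continuous.mul continuous_const ?_)
        exact Continuous.inner continuous_fst
          (((continuous_snd.fst).add (continuous_snd.snd)).smul continuous_const)
      exact ((((Gs.continuous.comp (continuous_fst.comp continuous_snd)).mul
        (Gs.continuous.comp (continuous_snd.comp continuous_snd))).mul hcont).mul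
        (Complex.continuous_ofReal.comp (h.continuous.comp continuous_fst))).aestronglyMeasurable
    · filter_upwards with z
      simp only [Function.uncurry]
      rw [norm_mul, norm_mul, norm_mul, eK_norm, Complex.norm_real, mul_one]
      exact le_of_eq (by ring)
  have key2 : (∫ x : E2, (∫ t : ℝ, Gs t * eK x (t • ω))^2 * (h x : ℂ))
      = ∫ p : ℝ × ℝ, Ψ p ∂((volume : Measure ℝ).prod volume) := by
    calc (∫ x : E2, (∫ t : ℝ, Gs t * eK x (t • ω))^2 * (h x : ℂ))
        = ∫ x : E2, ∫ p : ℝ × ℝ,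
            Gs p.1 * Gs p.2 * eK x ((p.1 + p.2) • ω) * (h x : ℂ)
            ∂((volume : Measure ℝ).prod volume) := by
          refine congrArg (integral volume) (funext fun x => ?_)
          rw [key1, ← integral_mul_const]
      _ = ∫ p : ℝ × ℝ, ∫ x : E2,
            Gs p.1 * Gs p.2 * eK x ((p.1 + p.2) • ω) * (h x : ℂ)
            ∂(volume : Measure E2) ∂((volume : Measure ℝ).prod volume) :=
          integral_integral_swap hΦi
      _ = ∫ p : ℝ × ℝ, Ψ p ∂((volume : Measure ℝ).prod volume) := by
          refine congrArg (integral _) (funext fun p => ?_)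
          have hre : (fun x : E2 => Gs p.1 * Gs p.2 * eK x ((p.1 + p.2) • ω) * (h x : ℂ))
              = fun x : E2 => (Gs p.1 * Gs p.2) * ((h x : ℂ) * eK x ((p.1 + p.2) • ω)) :=
            funext fun x => by ring
          rw [hre, integral_const_mul]
          rw [show (∫ x : E2, (h x : ℂ) * eK x ((p.1 + p.2) • ω))
              = FT (fun y => (h y : ℂ)) ((p.1 + p.2) • ω) from rfl, hH]
  -- RHS computation
  have hSmp : MeasurePreserving (fun z : ℝ × ℝ => (z.2, z.1 - z.2))
      ((volume : Measure ℝ).prod volume) ((volume : Measure ℝ).prod volume) :=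
    measurePreserving_prod_sub_swap volume volume
  have hemb : MeasurableEmbedding (fun z : ℝ × ℝ => (z.2, z.1 - z.2)) := by
    exact ((MeasurableEquiv.prodComm (α := ℝ) (β := ℝ)).trans
      (MeasurableEquiv.shearSubRight ℝ)).measurableEmbedding
  have hfun : (fun z : ℝ × ℝ => Gs z.2 * Gs (z.1 - z.2) * Hs z.1)
      = Ψ ∘ (fun z : ℝ × ℝ => (z.2, z.1 - z.2)) := by
    funext z
    simp only [Function.comp, hΨdef]
    have : z.2 + (z.1 - z.2) = z.1 := by ring
    rw [this]
  have hΘi : Integrable (fun z : ℝ × ℝ => Gs z.2 * Gs (z.1 - z.2) * Hs z.1)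
      ((volume : Measure ℝ).prod volume) := by
    rw [hfun]
    exact (hSmp.integrable_comp_emb hemb).2 hΨi
  have keyR : (∫ t : ℝ, (∫ u : ℝ, Gs u * Gs (t - u)) * Hs t)
      = ∫ p : ℝ × ℝ, Ψ p ∂((volume : Measure ℝ).prod volume) := by
    calc (∫ t : ℝ, (∫ u : ℝ, Gs u * Gs (t - u)) * Hs t)
        = ∫ t : ℝ, ∫ u : ℝ, Gs u * Gs (t - u) * Hs t := by
          refine congrArg (integral volume) (funext fun t => ?_)
          rw [← integral_mul_const]
      _ = ∫ z : ℝ × ℝ, Gs z.2 * Gs (z.1 - z.2) * Hs z.1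
            ∂((volume : Measure ℝ).prod volume) := (integral_prod _ hΘi).symm
      _ = ∫ z : ℝ × ℝ, Ψ ((fun z : ℝ × ℝ => (z.2, z.1 - z.2)) z)
            ∂((volume : Measure ℝ).prod volume) := by rw [hfun]; rfl
      _ = ∫ p : ℝ × ℝ, Ψ p ∂((volume : Measure ℝ).prod volume) :=
          hSmp.integral_comp hemb Ψ
  rw [key2, keyR]
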